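/- For infinite cardinals κ and λ, up to homeomorphism there is a one-to-one correspondence between dense subspaces X of the Cantor cube D(2)^λ of size κ and spaces of the form X_B = ⟨κ, τ_B⟩ where B = {⟨B_ξ^0, B_ξ^1⟩ : ξ < λ} is a separating and independent family of 2-partitions of κ; moreover X is μ-dense in D(2)^λ iff B is μ-independent. -/
import Mathlib


open Cardinal Set TopologicalSpace

universe u

/-- The family of 2-partitions encoded by `b` is separating. -/
def Separating {K L : Type u} (b : L → K → Bool) : Prop :=
  ∀ a a' : K, a ≠ a' → ∃ ξ : L, b ξ a ≠ b ξ a'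

/-- The family of 2-partitions encoded by `b` is independent: every finite Boolean
pattern is realized. -/
def Independent {K L : Type u} (b : L → K → Bool) : Prop :=
  ∀ (s : Finset L) (ε : L → Bool), {a : K | ∀ ξ ∈ s, b ξ a = ε ξ}.Nonempty

/-- `μ`-independence: every finite Boolean pattern is realized by at least `μ` points. -/
def MuIndependent {K L : Type u} (b : L → K → Bool) (μ : Cardinal.{u}) : Prop :=
  ∀ (s : Finset L) (ε : L → Bool), μ ≤ #↥{a : K | ∀ ξ ∈ s, b ξ a = ε ξ}

/-- The topology `τ_B` on `K` generated by the subbase `{B_ξ^i : ξ ∈ L, i ∈ 2}`. -/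
def tauB {K L : Type u} (b : L → K → Bool) : TopologicalSpace K :=
  TopologicalSpace.generateFrom {S : Set K | ∃ (ξ : L) (i : Bool), S = {a | b ξ a = i}}

/-- The natural map from `K` into the Cantor cube `D(2)^L`. -/
def eMap {K L : Type u} (b : L → K → Bool) : K → (L → Bool) := fun a ξ => b ξ a

/-- `A` is `μ`-dense: it meets every nonempty open set in at least `μ` points. -/
def MuDense {Y : Type u} [TopologicalSpace Y] (A : Set Y) (μ : Cardinal.{u}) : Prop :=
  ∀ U : Set Y, IsOpen U → U.Nonempty → μ ≤ #↥(A ∩ U)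

section Aux

variable {K L : Type u}

lemma cylOpen (s : Finset L) (ε : L → Bool) :
    IsOpen {f : L → Bool | ∀ ξ ∈ s, f ξ = ε ξ} := by
  have h : {f : L → Bool | ∀ ξ ∈ s, f ξ = ε ξ} = (↑s : Set L).pi (fun ξ => {ε ξ}) := by
    ext f; simp [Set.mem_pi]
  rw [h]
  exact isOpen_set_pi s.finite_toSet fun ξ _ => isOpen_discrete _

lemma exists_cyl {U : Set (L → Bool)} (hU : IsOpen U) {g : L → Bool} (hg : g ∈ U) :
    ∃ s : Finset L, {f | ∀ ξ ∈ s, f ξ = g ξ} ⊆ U := by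
  obtain ⟨v, ⟨Us, F, hUs, rfl⟩, hgv, hvU⟩ :=
    (isTopologicalBasis_pi
      (fun _ : L => isTopologicalBasis_opens)).exists_subset_of_mem_open hg hU
  exact ⟨F, fun f hf => hvU (fun ξ hξ => by rw [hf ξ hξ]; exact hgv ξ hξ)⟩

lemma eMap_inj {b : L → K → Bool} (hs : Separating b) : Function.Injective (eMap b) := by
  intro a a' h
  by_contra hne
  obtain ⟨ξ, hξ⟩ := hs a a' hne
  exact hξ (congrFun h ξ)

lemma tauB_eq (b : L → K → Bool) :
    tauB b = TopologicalSpace.induced (eMap b) inferInstance := by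
  unfold tauB
  apply le_antisymm
  · letI tK : TopologicalSpace K :=
      TopologicalSpace.generateFrom {S : Set K | ∃ (ξ : L) (i : Bool), S = {a | b ξ a = i}}
    have hc : Continuous (eMap b) := by
      apply continuous_pi
      intro ξ
      apply continuous_discrete_rng.2
      intro i
      exact isOpen_generateFrom_of_mem ⟨ξ, i, rfl⟩
    exact continuous_iff_le_induced.mp hc
  · letI tK : TopologicalSpace K := TopologicalSpace.induced (eMap b) inferInstance
    apply le_generateFrom
    rintro S ⟨ξ, i, rfl⟩
    have h : {a | b ξ a = i} = (eMap b) ⁻¹' ((fun f => f ξ) ⁻¹' {i}) := rfl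
    rw [h]
    have hcyl : IsOpen ((fun f : L → Bool => f ξ) ⁻¹' {i}) :=
      (continuous_apply ξ).isOpen_preimage _ (isOpen_discrete _)
    exact hcyl.preimage continuous_induced_dom

lemma range_dense {b : L → K → Bool} (hi : Independent b) :
    Dense (Set.range (eMap b)) := by
  rw [dense_iff_inter_open]
  rintro U hU ⟨g, hg⟩
  obtain ⟨s, hs⟩ := exists_cyl hU hg
  obtain ⟨a, ha⟩ := hi s g
  exact ⟨eMap b a, hs (fun ξ hξ => ha ξ hξ), Set.mem_range_self a⟩

lemma range_inter_cyl {b : L → K → Bool} (s : Finset L) (ε : L → Bool) :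
    Set.range (eMap b) ∩ {f | ∀ ξ ∈ s, f ξ = ε ξ}
      = eMap b '' {a | ∀ ξ ∈ s, b ξ a = ε ξ} := by
  ext f
  constructor
  · rintro ⟨⟨a, rfl⟩, hf⟩
    exact ⟨a, fun ξ hξ => hf ξ hξ, rfl⟩
  · rintro ⟨a, ha, rfl⟩
    exact ⟨Set.mem_range_self a, fun ξ hξ => ha ξ hξ⟩

end Aux

/-- The correspondence between dense subspaces of the Cantor cube `D(2)^λ` of size `κ`
and spaces `X_B = ⟨κ, τ_B⟩` for separating independent families `B` of 2-partitions
of `κ`: (1) for each such `B` the natural map is a homeomorphism onto a dense size-`κ`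
subspace; (2) every dense subspace of size `κ` arises this way; (3) `X_B` corresponds to
a `μ`-dense subspace iff `B` is `μ`-independent. -/
theorem stmt_13 (κ lam : Cardinal.{u}) (hκ : ℵ₀ ≤ κ) (hlam : ℵ₀ ≤ lam)
    (K L : Type u) (hK : #K = κ) (hL : #L = lam) :
    (∀ b : L → K → Bool, Separating b → Independent b →
      Function.Injective (eMap b) ∧
      tauB b = TopologicalSpace.induced (eMap b) inferInstance ∧
      Dense (Set.range (eMap b)) ∧ #↥(Set.range (eMap b)) = κ) ∧
    (∀ S : Set (L → Bool), Dense S → #↥S = κ →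
      ∃ b : L → K → Bool, Separating b ∧ Independent b ∧ Set.range (eMap b) = S) ∧
    (∀ b : L → K → Bool, Separating b → Independent b → ∀ μ : Cardinal.{u},
      (MuIndependent b μ ↔ MuDense (Set.range (eMap b)) μ)) := by
  refine ⟨?_, ?_, ?_⟩
  · intro b hsep hind
    refine ⟨eMap_inj hsep, tauB_eq b, range_dense hind, ?_⟩
    rw [Cardinal.mk_range_eq _ (eMap_inj hsep), hK]
  · intro S hS hScard
    obtain ⟨e⟩ := Cardinal.eq.1 (hK.trans hScard.symm)
    refine ⟨fun ξ a => (e a : L → Bool) ξ, ?_, ?_, ?_⟩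
    · intro a a' hne
      by_contra h
      push_neg at h
      exact hne (e.injective (Subtype.ext (funext h)))
    · intro s ε
      obtain ⟨g, hgc, hgS⟩ := dense_iff_inter_open.1 hS _ (cylOpen s ε) ⟨ε, fun ξ _ => rfl⟩
      refine ⟨e.symm ⟨g, hgS⟩, fun ξ hξ => ?_⟩
      simp only [Equiv.apply_symm_apply]
      exact hgc ξ hξ
    · ext f
      constructor
      · rintro ⟨a, rfl⟩
        exact (e a).2
      · intro hf
        exact ⟨e.symm ⟨f, hf⟩, by funext ξ; simp [eMap]⟩
  · intro b hsep hind μ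
    constructor
    · intro hmu U hU ⟨g, hg⟩
      obtain ⟨s, hs⟩ := exists_cyl hU hg
      calc μ ≤ #↥{a : K | ∀ ξ ∈ s, b ξ a = g ξ} := hmu s g
        _ = #↥(eMap b '' {a : K | ∀ ξ ∈ s, b ξ a = g ξ}) :=
            (Cardinal.mk_image_eq (eMap_inj hsep)).symm
        _ ≤ #↥(Set.range (eMap b) ∩ U) := by
            apply Cardinal.mk_le_mk_of_subset
            rw [← range_inter_cyl]
            exact Set.inter_subset_inter_right _ hs
    · intro hmd s ε
      have h := hmd _ (cylOpen s ε) ⟨ε, fun ξ _ => rfl⟩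
      rwa [range_inter_cyl, Cardinal.mk_image_eq (eMap_inj hsep)] at h
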